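/- If V is a square matrix over F[x] in weak Popov form with rows spanning a module V̂, and s ∈ V̂ is a nonzero vector of minimal degree among nonzero vectors of V̂ with leading position 0, then the row v of V with LP(v) = 0 satisfies deg v = deg s; in particular such a row yields a minimal solution. -/

import Mathlib

open Polynomial

noncomputable section

variable {F : Type*} [Field F]

/-- The degree of a vector of polynomials: maximum of the coordinate degrees. -/
def vecDeg {n : ℕ} (v : Fin n → Polynomial F) : WithBot ℕ :=
  Finset.univ.sup fun j => (v j).degree

/-- The degree of a vector, as a natural number. -/
def vecDegNat {n : ℕ} (v : Fin n → Polynomial F) : ℕ :=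
  Finset.univ.sup fun j => (v j).natDegree

/-- The leading position of a vector: the largest index attaining the degree. -/
def leadPos {n : ℕ} (v : Fin n → Polynomial F) : ℕ :=
  (Finset.univ.filter fun j => (v j).degree = vecDeg v).sup fun j => (j : ℕ)

/-- The value function val(v) = n * deg v + LP(v). -/
def vecVal {n : ℕ} (v : Fin n → Polynomial F) : ℕ :=
  n * vecDegNat v + leadPos v

/-- The weight-embedding map Φ. -/
def PhiW (ν : ℕ) {n : ℕ} (w : Fin n → ℕ) (v : Fin n → Polynomial F) :
    Fin n → Polynomial F :=
  fun j => X ^ (w j) * (Polynomial.expand F ν (v j))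

/-- The rows of the canonical basis matrix M. -/
def rowBasisM (ℓ : ℕ) (S G : Fin ℓ → Polynomial F) :
    Fin (ℓ+1) → Fin (ℓ+1) → Polynomial F :=
  fun i => Fin.cases (Fin.cons 1 S) (fun i' => fun j => if j = i'.succ then G i' else 0) i

lemma degree_le_vecDeg {n : ℕ} (v : Fin n → Polynomial F) (j : Fin n) :
    (v j).degree ≤ vecDeg v :=
  Finset.le_sup (f := fun j => (v j).degree) (Finset.mem_univ j)

lemma exists_lp_index {n : ℕ} {v : Fin n → Polynomial F} (hv : v ≠ 0) :
    ∃ j : Fin n, (v j).degree = vecDeg v ∧ (j : ℕ) = leadPos v := by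
  have hne : (Finset.univ.filter fun j => (v j).degree = vecDeg v).Nonempty := by
    obtain ⟨j, hj⟩ : ∃ j, v j ≠ 0 := by
      by_contra h; push_neg at h; exact hv (funext fun j => h j)
    obtain ⟨k, -, hk⟩ := Finset.exists_mem_eq_sup Finset.univ ⟨j, Finset.mem_univ j⟩
      (fun j => (v j).degree)
    exact ⟨k, Finset.mem_filter.2 ⟨Finset.mem_univ k, hk.symm⟩⟩
  obtain ⟨k, hk, hk2⟩ := Finset.exists_mem_eq_sup _ hne (fun j : Fin n => (j : ℕ))
  exact ⟨k, (Finset.mem_filter.1 hk).2, hk2.symm⟩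

lemma degree_lt_of_lp_lt {n : ℕ} {v : Fin n → Polynomial F} {j : Fin n}
    (hj : leadPos v < (j : ℕ)) : (v j).degree < vecDeg v := by
  rcases lt_or_eq_of_le (degree_le_vecDeg v j) with h | h
  · exact h
  · exfalso
    have : (j : ℕ) ≤ leadPos v :=
      Finset.le_sup (f := fun j : Fin n => (j : ℕ))
        (Finset.mem_filter.2 ⟨Finset.mem_univ j, h⟩)
    omega

lemma vecDeg_ne_bot {n : ℕ} {v : Fin n → Polynomial F} (hv : v ≠ 0) : vecDeg v ≠ ⊥ := by
  obtain ⟨j, hj⟩ : ∃ j, v j ≠ 0 := by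
    by_contra h; push_neg at h; exact hv (funext fun j => h j)
  intro h
  have := degree_le_vecDeg v j
  rw [h, le_bot_iff, Polynomial.degree_eq_bot] at this
  exact hj this

theorem stmt19 (n : ℕ) (V : Matrix (Fin n) (Fin n) (Polynomial F)) (hV : V.det ≠ 0)
    (hwp : Function.Injective fun i => leadPos (V i))
    (s : Fin n → Polynomial F) (hs : s ≠ 0)
    (hsM : s ∈ Submodule.span (Polynomial F) (Set.range fun r => V r))
    (hLPs : leadPos s = 0)
    (hmin : ∀ b, b ∈ Submodule.span (Polynomial F) (Set.range fun r => V r) →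
      b ≠ 0 → leadPos b = 0 → vecDeg s ≤ vecDeg b) :
    (∃ i, leadPos (V i) = 0 ∧ vecDeg (V i) = vecDeg s) ∧
      ∀ i, leadPos (V i) = 0 → vecDeg (V i) = vecDeg s := by
  classical
  have hrow : ∀ r, V r ≠ 0 := by
    intro r h
    exact hV (Matrix.det_eq_zero_of_row_eq_zero r (fun j => congrFun h j))
  obtain ⟨c, hc⟩ := (Submodule.mem_span_range_iff_exists_fun (Polynomial F)).1 hsM
  set T : Finset (Fin n) := Finset.univ.filter fun r => c r ≠ 0 with hT
  have hTmem : ∀ r, r ∈ T ↔ c r ≠ 0 := by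
    intro r; simp [hT]
  have hTne : T.Nonempty := by
    by_contra h
    rw [Finset.not_nonempty_iff_eq_empty] at h
    have hc0 : ∀ r, c r = 0 := by
      intro r
      by_contra hr
      have : r ∈ T := (hTmem r).2 hr
      rw [h] at this
      exact absurd this (Finset.notMem_empty r)
    apply hs
    rw [← hc]
    simp [hc0]
  set f : Fin n → WithBot ℕ := fun r => (c r).degree + vecDeg (V r) with hf
  set D := T.sup f with hD
  set T' := T.filter fun r => f r = D with hT'
  have hT'ne : T'.Nonempty := by
    obtain ⟨r, hr, hre⟩ := Finset.exists_mem_eq_sup T hTne f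
    exact ⟨r, Finset.mem_filter.2 ⟨hr, hre.symm⟩⟩
  obtain ⟨r0, hr0T', hr0⟩ := Finset.exists_mem_eq_sup T' hT'ne (fun r => leadPos (V r))
  obtain ⟨hr0T, hfr0⟩ := Finset.mem_filter.1 hr0T'
  have hcr0 : c r0 ≠ 0 := (hTmem r0).1 hr0T
  have hDbot : D ≠ ⊥ := by
    rw [← hfr0, hf]
    exact WithBot.add_ne_bot.2 ⟨fun h => hcr0 (Polynomial.degree_eq_bot.1 h),
      vecDeg_ne_bot (hrow r0)⟩
  obtain ⟨j0, hj0deg, hj0lp⟩ := exists_lp_index (hrow r0)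
  -- coordinates of s
  have hsj : ∀ j, s j = ∑ r, c r * V r j := by
    intro j
    rw [← hc]
    simp [Finset.sum_apply]
  -- key bound on individual terms
  have key : ∀ r : Fin n, ∀ j : Fin n, leadPos (V r0) ≤ (j : ℕ) →
      (r ≠ r0 ∨ leadPos (V r0) < (j : ℕ)) → (c r * V r j).degree < D := by
    intro r j hle hor
    by_cases hcr : c r = 0
    · have h0 : c r * V r j = 0 := by rw [hcr, zero_mul]
      rw [h0, Polynomial.degree_zero]
      exact hDbot.bot_lt
    have hrT : r ∈ T := (hTmem r).2 hcr
    have hfD : f r ≤ D := Finset.le_sup hrT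
    rcases lt_or_eq_of_le hfD with hlt | heq
    · calc (c r * V r j).degree = (c r).degree + (V r j).degree := Polynomial.degree_mul
        _ ≤ (c r).degree + vecDeg (V r) :=
            add_le_add_right (degree_le_vecDeg (V r) j) _
        _ < D := hlt
    · -- f r = D, so r ∈ T' and leadPos (V r) ≤ leadPos (V r0)
      have hrT' : r ∈ T' := Finset.mem_filter.2 ⟨hrT, heq⟩
      have hlp_le : leadPos (V r) ≤ leadPos (V r0) := by
        rw [← hr0]
        exact Finset.le_sup (f := fun r => leadPos (V r)) hrT'
      have hlp_lt : leadPos (V r) < (j : ℕ) := by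
        rcases hor with h1 | h2
        · have : leadPos (V r) ≠ leadPos (V r0) := fun h => h1 (hwp h)
          omega
        · omega
      have hvd : (V r j).degree < vecDeg (V r) := degree_lt_of_lp_lt hlp_lt
      calc (c r * V r j).degree = (c r).degree + (V r j).degree := Polynomial.degree_mul
        _ < (c r).degree + vecDeg (V r) :=
            WithBot.add_lt_add_left (fun h => hcr (Polynomial.degree_eq_bot.1 h)) hvd
        _ = D := heq
  -- degree of s j0 is exactly D
  have hsj0 : (s j0).degree = D := by
    rw [hsj j0, ← Finset.sum_erase_add Finset.univ _ (Finset.mem_univ r0)]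
    have h1 : (∑ r ∈ Finset.univ.erase r0, c r * V r j0).degree < D := by
      apply lt_of_le_of_lt (Polynomial.degree_sum_le _ _)
      rw [Finset.sup_lt_iff hDbot.bot_lt]
      intro r hr
      exact key r j0 (le_of_eq hj0lp.symm) (Or.inl (Finset.ne_of_mem_erase hr))
    have h2 : (c r0 * V r0 j0).degree = D := by
      rw [Polynomial.degree_mul, hj0deg]
      exact hfr0
    rw [← h2] at h1 ⊢
    exact Polynomial.degree_add_eq_right_of_degree_lt h1
  -- all coordinates have degree ≤ D
  have hle : ∀ j, (s j).degree ≤ D := by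
    intro j
    rw [hsj j]
    apply le_trans (Polynomial.degree_sum_le _ _)
    apply Finset.sup_le
    intro r _
    by_cases hcr : c r = 0
    · simp [hcr]
    · have hrT : r ∈ T := (hTmem r).2 hcr
      calc (c r * V r j).degree = (c r).degree + (V r j).degree := Polynomial.degree_mul
        _ ≤ (c r).degree + vecDeg (V r) :=
            add_le_add_right (degree_le_vecDeg (V r) j) _
        _ ≤ D := Finset.le_sup (f := f) hrT
  -- coordinates beyond j0 have degree < D
  have hlt : ∀ j : Fin n, (j0 : ℕ) < (j : ℕ) → (s j).degree < D := by
    intro j hj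
    rw [hsj j]
    apply lt_of_le_of_lt (Polynomial.degree_sum_le _ _)
    rw [Finset.sup_lt_iff hDbot.bot_lt]
    intro r _
    exact key r j (by omega) (Or.inr (by omega))
  -- vecDeg s = D
  have hvds : vecDeg s = D := by
    apply le_antisymm
    · exact Finset.sup_le fun j _ => hle j
    · rw [← hsj0]
      exact degree_le_vecDeg s j0
  -- leadPos s = j0
  have hlps : leadPos s = (j0 : ℕ) := by
    apply le_antisymm
    · apply Finset.sup_le
      intro j hj
      have hjd : (s j).degree = vecDeg s := (Finset.mem_filter.1 hj).2
      by_contra h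
      have h' : (j0 : ℕ) < (j : ℕ) := by omega
      have := hlt j h'
      rw [hjd, hvds] at this
      exact lt_irrefl D this
    · apply Finset.le_sup (f := fun j : Fin n => (j : ℕ))
      apply Finset.mem_filter.2
      exact ⟨Finset.mem_univ j0, by rw [hsj0, hvds]⟩
  have hlp0 : leadPos (V r0) = 0 := by
    rw [← hj0lp]
    rw [hlps] at hLPs
    exact hLPs
  -- vecDeg (V r0) ≤ vecDeg s
  have h1 : vecDeg (V r0) ≤ vecDeg s := by
    rw [hvds, ← hfr0, hf]
    exact le_add_of_nonneg_left (zero_le_degree_iff.2 hcr0)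
  have h2 : vecDeg s ≤ vecDeg (V r0) :=
    hmin (V r0) (Submodule.subset_span ⟨r0, rfl⟩) (hrow r0) hlp0
  have heq : vecDeg (V r0) = vecDeg s := le_antisymm h1 h2
  refine ⟨⟨r0, hlp0, heq⟩, ?_⟩
  intro i hi
  have : i = r0 := hwp (by simp only []; rw [hi, hlp0])
  rw [this]
  exact heq
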